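/- arXiv:2407.05459 — 6 statements merged into one kernel-verified Lean document; each statement's English description precedes it below -/
import Mathlib

section
/- Fix a signal s with weights w_θ = μ(θ)π(s|θ) ≥ 0, contracts p^θ ∈ ℝ₊^m, and suppose the action-contract pair (a, {p^θ}) is ξ-IC under s, i.e., ∑_θ w_θ[⟨F^θ_a, p^θ⟩ − c_a] ≥ ∑_θ w_θ[⟨F^θ_i, p^θ⟩ − c_i] − ξ for all actions i. Let η ∈ (0,1] and define perturbed contracts p̄^θ = (1−η)p^θ + η r, and let a' be any exact best response under {p̄^θ} (i.e., (a', {p̄^θ}) is 0-IC). Then the principal's utility satisfies ∑_θ w_θ ⟨F^θ_{a'}, r − p̄^θ⟩ ≥ ∑_θ w_θ ⟨F^θ_a, r − p^θ⟩ − ξ/η − η·∑_θ w_θ ⟨F^θ_a, r − p^θ⟩. In particular, if rewards satisfy ⟨F^θ_a, r − p^θ⟩-terms sum to at most 1 and we set η = √ξ, the utility loss is at most (1+1)√ξ per signal, i.e., ∑_θ w_θ ⟨F^θ_{a'}, r − p̄^θ⟩ ≥ ∑_θ w_θ ⟨F^θ_a, r − p^θ⟩ − 2√ξ. -/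
/-- ξ-IC to IC conversion for ambiguous contracts: perturbing the contracts with
a linear contract of weight η and letting the agent exactly best respond loses
at most ξ/η + η·U of the principal's utility; with η = √ξ and U ≤ 1 the loss is
at most 2√ξ. -/
theorem stmt_1 {Θ : Type} [Fintype Θ] {n m : ℕ}
    (w : Θ → ℝ) (F : Θ → Fin n → Fin m → ℝ) (c : Fin n → ℝ) (r : Fin m → ℝ)
    (p : Θ → Fin m → ℝ) (ξ η : ℝ) (a a' : Fin n)
    (hw : ∀ θ, 0 ≤ w θ) (hξ : 0 ≤ ξ) (hη : 0 < η) (hη1 : η ≤ 1)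
    (hc : ∀ i, 0 ≤ c i ∧ c i ≤ 1) (hr : ∀ j, 0 ≤ r j ∧ r j ≤ 1)
    (hξIC : ∀ i, ∑ θ, w θ * ((∑ j, F θ a j * p θ j) - c a) ≥
                 ∑ θ, w θ * ((∑ j, F θ i j * p θ j) - c i) - ξ)
    (pbar : Θ → Fin m → ℝ)
    (hpbar : ∀ θ j, pbar θ j = (1 - η) * p θ j + η * r j)
    (hbr : ∀ i, ∑ θ, w θ * ((∑ j, F θ a' j * pbar θ j) - c a') ≥
                ∑ θ, w θ * ((∑ j, F θ i j * pbar θ j) - c i)) :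
    (∑ θ, w θ * (∑ j, F θ a' j * (r j - pbar θ j)) ≥
      ∑ θ, w θ * (∑ j, F θ a j * (r j - p θ j)) - ξ/η -
        η * ∑ θ, w θ * (∑ j, F θ a j * (r j - p θ j))) ∧
    ((∑ θ, w θ * (∑ j, F θ a j * (r j - p θ j)) ≤ 1) → η = Real.sqrt ξ →
      ∑ θ, w θ * (∑ j, F θ a' j * (r j - pbar θ j)) ≥
        ∑ θ, w θ * (∑ j, F θ a j * (r j - p θ j)) - 2 * Real.sqrt ξ) := by
  -- Agent's weighted payment and reward utilities per action
  set A : Fin n → ℝ := fun i => ∑ θ, w θ * ((∑ j, F θ i j * p θ j) - c i) with hA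
  set B : Fin n → ℝ := fun i => ∑ θ, w θ * ((∑ j, F θ i j * r j) - c i) with hB
  -- per-θ decomposition of the perturbed payment
  have hbarsum : ∀ (i : Fin n) (θ : Θ), (∑ j, F θ i j * pbar θ j)
      = (1 - η) * (∑ j, F θ i j * p θ j) + η * (∑ j, F θ i j * r j) := by
    intro i θ
    rw [Finset.mul_sum, Finset.mul_sum, ← Finset.sum_add_distrib]
    exact Finset.sum_congr rfl fun j _ => by rw [hpbar]; ring
  -- agent utility under pbar
  have key : ∀ i : Fin n, ∑ θ, w θ * ((∑ j, F θ i j * pbar θ j) - c i)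
      = (1 - η) * A i + η * B i := by
    intro i
    rw [hA, hB, Finset.mul_sum, Finset.mul_sum, ← Finset.sum_add_distrib]
    exact Finset.sum_congr rfl fun θ _ => by rw [hbarsum]; ring
  -- principal utility under pbar
  have keyP : ∀ i : Fin n, ∑ θ, w θ * (∑ j, F θ i j * (r j - pbar θ j))
      = (1 - η) * (B i - A i) := by
    intro i
    have h1 : ∀ θ : Θ, (∑ j, F θ i j * (r j - pbar θ j))
        = (1 - η) * ((∑ j, F θ i j * r j) - (∑ j, F θ i j * p θ j)) := by
      intro θ
      rw [mul_sub, Finset.mul_sum, Finset.mul_sum, ← Finset.sum_sub_distrib]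
      exact Finset.sum_congr rfl fun j _ => by rw [hpbar]; ring
    have h2 : ∑ θ, w θ * (∑ j, F θ i j * (r j - pbar θ j))
        = (1 - η) * ∑ θ, w θ * ((∑ j, F θ i j * r j) - (∑ j, F θ i j * p θ j)) := by
      rw [Finset.mul_sum]
      exact Finset.sum_congr rfl fun θ _ => by rw [h1]; ring
    rw [h2, hA, hB, ← Finset.sum_sub_distrib]
    congr 1
    exact Finset.sum_congr rfl fun θ _ => by ring
  -- principal utility under original contracts
  have keyQ : ∀ i : Fin n, ∑ θ, w θ * (∑ j, F θ i j * (r j - p θ j)) = B i - A i := by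
    intro i
    rw [hA, hB, ← Finset.sum_sub_distrib]
    refine Finset.sum_congr rfl fun θ _ => ?_
    have hsum : ∑ j, F θ i j * (r j - p θ j)
        = (∑ j, F θ i j * r j) - (∑ j, F θ i j * p θ j) := by
      rw [← Finset.sum_sub_distrib]
      exact Finset.sum_congr rfl fun j _ => by ring
    rw [hsum]; ring
  -- the two key inequalities
  have hE : A a ≥ A a' - ξ := hξIC a'
  have hBR : (1 - η) * A a' + η * B a' ≥ (1 - η) * A a + η * B a := by
    have := hbr a
    rwa [key a', key a] at this
  set X : ℝ := B a' - A a' with hX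
  set Y : ℝ := B a - A a with hY
  have h1 : η * (X - Y) ≥ -ξ := by nlinarith [hBR, hE]
  have hq : ξ / η * η = ξ := div_mul_cancel₀ ξ hη.ne'
  have hXY : X - Y + ξ / η ≥ 0 := by
    have h2 : η * (X - Y + ξ / η) ≥ 0 := by nlinarith [h1, hq]
    nlinarith [h2, hη]
  have main : (1 - η) * X ≥ Y - ξ / η - η * Y := by
    have hqnn : 0 ≤ ξ / η := div_nonneg hξ hη.le
    nlinarith [mul_nonneg (by linarith : (0:ℝ) ≤ 1 - η) hXY, hqnn]
  constructor
  · rw [keyP a', keyQ a]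
    exact main
  · intro hY1 hsq
    rw [keyP a', keyQ a]
    rw [keyQ a] at hY1
    have hξη : ξ = η ^ 2 := by rw [hsq, Real.sq_sqrt hξ]
    have hq2 : ξ / η = η := by rw [hξη]; field_simp
    rw [← hsq]
    have hηY : η * Y ≤ η := by nlinarith [hY1, hη]
    nlinarith [main, hq2, hηY]
end

section
/- Let (a, p) be a single-contract pair and w_θ = μ(θ)π(s|θ) weights under a signal s such that (a, p) is 2δ-IC: ∑_θ w_θ ⟨F^θ_a, p⟩ − c_a ≥ ∑_θ w_θ ⟨F^θ_i, p⟩ − c_i − 2δ for all i, where the weights sum to 1. For η ∈ (0,1), set p̄ = (1−η)p + η r and let ā be an exact best response to p̄. Then the principal's utility satisfies ∑_θ w_θ ⟨F^θ_ā, r − p̄⟩ ≥ ∑_θ w_θ ⟨F^θ_a, r − p⟩ − 2δ/η − η. In particular, with η = √δ, the loss is at most 3√δ. -/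
/-- 2δ-IC to IC conversion for a single contract under a posterior: perturbing
the contract towards the linear contract r and best responding loses at most
2δ/η + η; with η = √δ the loss is at most 3√δ. -/
theorem stmt_2 {Θ : Type} [Fintype Θ] {n m : ℕ}
    (w : Θ → ℝ) (F : Θ → Fin n → Fin m → ℝ) (c : Fin n → ℝ) (r : Fin m → ℝ)
    (p : Fin m → ℝ) (δ η : ℝ) (a abar : Fin n)
    (hw : ∀ θ, 0 ≤ w θ) (hw1 : ∑ θ, w θ = 1)
    (hδ : 0 ≤ δ) (hη : 0 < η) (hη1 : η < 1)
    (hU : ∑ θ, w θ * (∑ j, F θ a j * (r j - p j)) ≤ 1)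
    (h2δIC : ∀ i, (∑ θ, w θ * (∑ j, F θ a j * p j)) - c a ≥
                  (∑ θ, w θ * (∑ j, F θ i j * p j)) - c i - 2*δ)
    (pbar : Fin m → ℝ)
    (hpbar : ∀ j, pbar j = (1 - η) * p j + η * r j)
    (hbr : ∀ i, (∑ θ, w θ * (∑ j, F θ abar j * pbar j)) - c abar ≥
                (∑ θ, w θ * (∑ j, F θ i j * pbar j)) - c i) :
    (∑ θ, w θ * (∑ j, F θ abar j * (r j - pbar j)) ≥
      ∑ θ, w θ * (∑ j, F θ a j * (r j - p j)) - 2*δ/η - η) ∧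
    (η = Real.sqrt δ →
      ∑ θ, w θ * (∑ j, F θ abar j * (r j - pbar j)) ≥
        ∑ θ, w θ * (∑ j, F θ a j * (r j - p j)) - 3 * Real.sqrt δ) := by
  set P : Fin n → ℝ := fun i => ∑ θ, w θ * (∑ j, F θ i j * p j) with hP
  set R : Fin n → ℝ := fun i => ∑ θ, w θ * (∑ j, F θ i j * r j) with hR
  have hinner : ∀ θ i, (∑ j, F θ i j * pbar j)
      = (1-η) * (∑ j, F θ i j * p j) + η * (∑ j, F θ i j * r j) := by
    intro θ i
    rw [Finset.mul_sum, Finset.mul_sum, ← Finset.sum_add_distrib]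
    exact Finset.sum_congr rfl fun j _ => by rw [hpbar]; ring
  have hsum : ∀ i, (∑ θ, w θ * (∑ j, F θ i j * pbar j))
      = (1-η) * P i + η * R i := by
    intro i
    rw [hP, hR]
    simp only
    rw [Finset.mul_sum, Finset.mul_sum, ← Finset.sum_add_distrib]
    refine Finset.sum_congr rfl fun θ _ => ?_
    rw [hinner θ i]; ring
  have hdiff : ∀ i, (∑ θ, w θ * (∑ j, F θ i j * (r j - p j))) = R i - P i := by
    intro i
    rw [hP, hR]
    simp only
    rw [← Finset.sum_sub_distrib]
    refine Finset.sum_congr rfl fun θ _ => ?_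
    rw [← mul_sub, ← Finset.sum_sub_distrib]
    congr 1
    exact Finset.sum_congr rfl fun j _ => by ring
  have hdiffbar : (∑ θ, w θ * (∑ j, F θ abar j * (r j - pbar j)))
      = (1-η) * (R abar - P abar) := by
    rw [hP, hR]
    simp only
    rw [mul_sub, Finset.mul_sum, Finset.mul_sum, ← Finset.sum_sub_distrib]
    refine Finset.sum_congr rfl fun θ _ => ?_
    have h : (∑ j, F θ abar j * (r j - pbar j))
        = (1-η) * (∑ j, F θ abar j * r j) - (1-η) * (∑ j, F θ abar j * p j) := by
      rw [Finset.mul_sum, Finset.mul_sum, ← Finset.sum_sub_distrib]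
      exact Finset.sum_congr rfl fun j _ => by rw [hpbar]; ring
    rw [h]; ring
  have hbr' := hbr a
  rw [hsum a, hsum abar] at hbr'
  have hIC := h2δIC abar
  have hU' : R a - P a ≤ 1 := by rw [← hdiff a]; exact hU
  have hkey : η * (R abar - P abar) ≥ η * (R a - P a) - 2*δ := by
    rw [hP, hR] at *
    simp only at *
    nlinarith [hbr', hIC]
  have h2δη : 2*δ/η * η = 2*δ := div_mul_cancel₀ _ hη.ne'
  have hx : R abar - P abar ≥ R a - P a - 2*δ/η := by
    nlinarith [hkey, h2δη, hη]
  have main : (∑ θ, w θ * (∑ j, F θ abar j * (r j - pbar j)) ≥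
      ∑ θ, w θ * (∑ j, F θ a j * (r j - p j)) - 2*δ/η - η) := by
    rw [hdiffbar, hdiff a]
    nlinarith [mul_le_mul_of_nonneg_right hx (by linarith : (0:ℝ) ≤ 1-η),
      mul_le_mul_of_nonneg_left hU' hη.le, h2δη, hδ, hη, hη1,
      mul_nonneg hδ hη.le, div_nonneg (by linarith : (0:ℝ) ≤ 2*δ) hη.le]
  refine ⟨main, fun hsq => ?_⟩
  have hδpos : 0 < δ := by
    rcases lt_or_eq_of_le hδ with h | h
    · exact h
    · exfalso; rw [← h, Real.sqrt_zero] at hsq; linarith [hη, hsq]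
  have hs : Real.sqrt δ * Real.sqrt δ = δ := Real.mul_self_sqrt hδ
  have hsp : 0 < Real.sqrt δ := Real.sqrt_pos.2 hδpos
  have hδη : 2*δ/η = 2 * Real.sqrt δ := by
    rw [hsq, eq_comm, eq_div_iff hsp.ne']
    nlinarith [hs]
  rw [hδη] at main
  linarith
end

section
/- Suppose nonnegative reals (ρ_v)_{v∈V} indexed by a finite set V and constants δ > 0, k̂ > 0 satisfy ρ_v ≤ (1/(2k̂))·S − 11/(320·δ·k̂) for all v ∈ V, where S = ∑_{v∈V} ρ_v. Define V̂ = {v ∈ V : ρ_v ≥ S/(4|V|)}. If S > 0 then |V̂| ≥ (3/2)·k̂. -/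
open scoped Classical in
/-- The set of "heavy" vertices (those with ρ_v at least S/(4|V|)) has size at
least (3/2)·k̂, given that every ρ_v is at most S/(2k̂) − 11/(320δk̂). -/
theorem stmt_5 {V : Type} [Fintype V]
    (ρ : V → ℝ) (δ khat : ℝ) (hδ : 0 < δ) (hk : 0 < khat)
    (hρ : ∀ v, 0 ≤ ρ v)
    (hub : ∀ v, ρ v ≤ (1/(2*khat)) * (∑ u, ρ u) - 11/(320*δ*khat))
    (hS : 0 < ∑ u, ρ u) :
    (3/2 : ℝ) * khat ≤
      ((Finset.univ.filter
        fun v => (∑ u, ρ u) / (4 * (Fintype.card V : ℝ)) ≤ ρ v).card : ℝ) := by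
  set S : ℝ := ∑ u, ρ u with hSdef
  have hne : Nonempty V := by
    by_contra h
    rw [not_nonempty_iff] at h
    simp [hSdef, Finset.univ_eq_empty] at hS
  have hnpos : 0 < (Fintype.card V : ℝ) := by
    exact_mod_cast Fintype.card_pos
  set n : ℝ := (Fintype.card V : ℝ) with hn
  set A : Finset V := Finset.univ.filter
      (fun v => S / (4 * n) ≤ ρ v) with hA
  have hub' : ∀ v, ρ v ≤ S / (2 * khat) := by
    intro v
    have h1 := hub v
    have h2 : 0 < 11 / (320 * δ * khat) := by positivity
    have : (1/(2*khat)) * S = S / (2*khat) := by ring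
    linarith [h1, this ▸ h1]
  have hAcardn : (A.card : ℝ) ≤ n := by
    rw [hn]
    exact_mod_cast Finset.card_le_card (Finset.subset_univ A) |>.trans_eq
      (Finset.card_univ)
  have hsumA : ∑ v ∈ A, ρ v ≤ (A.card : ℝ) * (S / (2 * khat)) := by
    calc ∑ v ∈ A, ρ v ≤ ∑ _v ∈ A, S / (2 * khat) :=
          Finset.sum_le_sum fun v _ => hub' v
      _ = (A.card : ℝ) * (S / (2 * khat)) := by
          rw [Finset.sum_const, nsmul_eq_mul]
  have hsumAc : ∑ v ∈ Finset.univ.filter (fun v => ¬ (S / (4 * n) ≤ ρ v)), ρ v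
      ≤ S / 4 := by
    have hle : ∀ v ∈ Finset.univ.filter (fun v => ¬ (S / (4 * n) ≤ ρ v)),
        ρ v ≤ S / (4 * n) := by
      intro v hv
      rw [Finset.mem_filter] at hv
      exact le_of_lt (not_le.mp hv.2)
    calc ∑ v ∈ Finset.univ.filter (fun v => ¬ (S / (4 * n) ≤ ρ v)), ρ v
        ≤ ∑ _v ∈ Finset.univ.filter (fun v => ¬ (S / (4 * n) ≤ ρ v)),
            S / (4 * n) := Finset.sum_le_sum hle
      _ = ((Finset.univ.filter (fun v => ¬ (S / (4 * n) ≤ ρ v))).card : ℝ)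
            * (S / (4 * n)) := by rw [Finset.sum_const, nsmul_eq_mul]
      _ ≤ n * (S / (4 * n)) := by
          apply mul_le_mul_of_nonneg_right _ (by positivity)
          rw [hn]
          exact_mod_cast (Finset.card_le_card (Finset.subset_univ _)).trans_eq
            Finset.card_univ
      _ = S / 4 := by field_simp
  have hsplit : S = ∑ v ∈ A, ρ v +
      ∑ v ∈ Finset.univ.filter (fun v => ¬ (S / (4 * n) ≤ ρ v)), ρ v := by
    rw [hSdef, hA]
    exact (Finset.sum_filter_add_sum_filter_not _ _ _).symm
  have key : (3/4 : ℝ) * S ≤ (A.card : ℝ) * (S / (2 * khat)) := by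
    linarith
  have hcancel : (3/2 : ℝ) * khat * S ≤ (A.card : ℝ) * S := by
    have h2k : 0 < 2 * khat := by linarith
    have := (mul_le_mul_of_nonneg_right key (le_of_lt h2k))
    calc (3/2 : ℝ) * khat * S = (3/4 : ℝ) * S * (2 * khat) := by ring
      _ ≤ (A.card : ℝ) * (S / (2 * khat)) * (2 * khat) := this
      _ = (A.card : ℝ) * S := by rw [mul_assoc, div_mul_cancel₀ _ h2k.ne']
  exact le_of_mul_le_mul_right hcancel hS
end

section
/- In the joint design problem with a single explicit contract, the optimal value is attained: there exists an optimal pair (π*, p*) (a signaling scheme and a single contract) maximizing the principal's expected utility, and moreover it can be taken to be a direct mechanism with at most n signals, each inducing a distinct best-response action. -/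
/-- The joint design problem with a single explicit contract attains its
optimum at a direct, incentive-compatible mechanism with one signal per action,
which dominates every feasible mechanism over any finite signal set. -/
theorem stmt_10 {Θ : Type} [Fintype Θ] {n m : ℕ}
    (μ : Θ → ℝ) (F : Θ → Fin (n+1) → Fin m → ℝ) (c : Fin (n+1) → ℝ)
    (r : Fin m → ℝ)
    (hμ0 : ∀ θ, 0 ≤ μ θ) (hμ1 : ∑ θ, μ θ = 1)
    (hF0 : ∀ θ i j, 0 ≤ F θ i j) (hF1 : ∀ θ i, ∑ j, F θ i j = 1)
    (hc : ∀ i, 0 ≤ c i ∧ c i ≤ 1) (hc0 : c 0 = 0)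
    (hr : ∀ j, 0 ≤ r j ∧ r j ≤ 1) :
    ∃ (πstar : Θ → Fin (n+1) → ℝ) (pstar : Fin m → ℝ),
      (∀ θ s, 0 ≤ πstar θ s) ∧ (∀ θ, ∑ s, πstar θ s = 1) ∧ (∀ j, 0 ≤ pstar j) ∧
      (∀ s i : Fin (n+1),
        ∑ θ, μ θ * πstar θ s * ((∑ j, F θ s j * pstar j) - c s) ≥
        ∑ θ, μ θ * πstar θ s * ((∑ j, F θ i j * pstar j) - c i)) ∧
      (∀ (S : Type) [Fintype S], ∀ (π : Θ → S → ℝ) (p : Fin m → ℝ)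
          (a : S → Fin (n+1)),
        (∀ θ s, 0 ≤ π θ s) → (∀ θ, ∑ s, π θ s = 1) → (∀ j, 0 ≤ p j) →
        (∀ s i, ∑ θ, μ θ * π θ s * ((∑ j, F θ (a s) j * p j) - c (a s)) ≥
                ∑ θ, μ θ * π θ s * ((∑ j, F θ i j * p j) - c i)) →
        ∑ s, ∑ θ, μ θ * π θ s * (∑ j, F θ (a s) j * (r j - p j)) ≤
        ∑ s, ∑ θ, μ θ * πstar θ s * (∑ j, F θ s j * (r j - pstar j))) := by
  classical
  -- the principal's value function on direct mechanisms
  set V : (Θ → Fin (n+1) → ℝ) × (Fin m → ℝ) → ℝ :=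
    fun x => ∑ s, ∑ θ, μ θ * x.1 θ s * (∑ j, F θ s j * (r j - x.2 j)) with hVdef
  -- expansion of the inner sum
  have hexp : ∀ (q : Fin m → ℝ) (θ : Θ) (i : Fin (n+1)),
      (∑ j, F θ i j * (r j - q j)) = (∑ j, F θ i j * r j) - ∑ j, F θ i j * q j := by
    intro q θ i
    simp [mul_sub, Finset.sum_sub_distrib]
  -- the payment bound
  set C : ℝ := 2 * ((n : ℝ) + 1) with hCdef
  have hC0 : 0 ≤ C := by positivity
  set g : Θ × Fin (n+1) × Fin m → ℝ := fun t =>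
    if 0 < μ t.1 * F t.1 t.2.1 t.2.2 then C / (μ t.1 * F t.1 t.2.1 t.2.2) else 0
    with hgdef
  have hg0 : ∀ t, 0 ≤ g t := by
    intro t
    rw [hgdef]
    dsimp only
    split
    · positivity
    · exact le_rfl
  set B : ℝ := ∑ t, g t with hBdef
  have hB0 : 0 ≤ B := Finset.sum_nonneg fun t _ => hg0 t
  have hBge : ∀ θ i j, 0 < μ θ * F θ i j → C / (μ θ * F θ i j) ≤ B := by
    intro θ i j h
    have h2 := Finset.single_le_sum (f := g) (fun t _ => hg0 t)
      (Finset.mem_univ ((θ, i, j) : Θ × Fin (n+1) × Fin m))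
    rw [hBdef]
    simpa [hgdef, if_pos h] using h2
  -- feasibility of direct mechanisms
  set Feas : Set ((Θ → Fin (n+1) → ℝ) × (Fin m → ℝ)) :=
    {x | (∀ θ s, 0 ≤ x.1 θ s) ∧ (∀ θ, ∑ s, x.1 θ s = 1) ∧ (∀ j, 0 ≤ x.2 j) ∧
      (∀ s i : Fin (n+1),
        ∑ θ, μ θ * x.1 θ s * ((∑ j, F θ i j * x.2 j) - c i) ≤
        ∑ θ, μ θ * x.1 θ s * ((∑ j, F θ s j * x.2 j) - c s))} with hFeasdef
  -- the compact feasible region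
  set K : Set ((Θ → Fin (n+1) → ℝ) × (Fin m → ℝ)) :=
    {x | x ∈ Feas ∧ ∀ j, x.2 j ≤ B} with hKdef
  -- the babbling mechanism
  set x0 : (Θ → Fin (n+1) → ℝ) × (Fin m → ℝ) :=
    (fun _ s => if s = 0 then 1 else 0, fun _ => 0) with hx0def
  have hx0K : x0 ∈ K := by
    refine ⟨⟨?_, ?_, ?_, ?_⟩, ?_⟩
    · intro θ s; rw [hx0def]; dsimp only; split <;> norm_num
    · intro θ; simp [hx0def]
    · intro j; simp [hx0def]
    · intro s i
      rcases eq_or_ne s 0 with h | h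
      · subst h
        have hR : ∑ θ, μ θ * x0.1 θ 0 * ((∑ j, F θ 0 j * x0.2 j) - c 0) = 0 := by
          rw [hx0def, hc0]; simp
        have hL : ∑ θ, μ θ * x0.1 θ 0 * ((∑ j, F θ i j * x0.2 j) - c i) ≤ 0 := by
          rw [hx0def]
          dsimp only
          refine Finset.sum_nonpos fun θ _ => ?_
          simp only [if_pos rfl, eq_self_iff_true, if_true, mul_one, mul_zero,
            Finset.sum_const_zero, zero_sub]
          exact mul_nonpos_of_nonneg_of_nonpos (hμ0 θ) (neg_nonpos.mpr (hc i).1)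
        linarith
      · rw [hx0def]
        dsimp only
        simp [h]
    · intro j; rw [hx0def]; exact hB0
  have hx0V : 0 ≤ V x0 := by
    rw [hVdef, hx0def]
    dsimp only
    refine Finset.sum_nonneg fun s _ => Finset.sum_nonneg fun θ _ => ?_
    refine mul_nonneg (mul_nonneg (hμ0 θ) ?_) ?_
    · split <;> norm_num
    · exact Finset.sum_nonneg fun j _ => mul_nonneg (hF0 θ s j) (by linarith [(hr j).1])
  -- truncation: any feasible mechanism with nonnegative value can be moved into K
  have htrunc : ∀ x ∈ Feas, 0 ≤ V x → ∃ y ∈ K, V y = V x := by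
    rintro ⟨π, p⟩ ⟨hπ0, hπ1, hp0, hIC⟩ hVx
    -- masses
    set mass : Fin (n+1) → ℝ := fun s => ∑ θ, μ θ * π θ s with hmassdef
    have hmass0 : ∀ s, 0 ≤ mass s :=
      fun s => Finset.sum_nonneg fun θ _ => mul_nonneg (hμ0 θ) (hπ0 θ s)
    have hmass1 : ∑ s, mass s = 1 := by
      rw [hmassdef]
      rw [Finset.sum_comm]
      simp only [← Finset.mul_sum]
      simp [hπ1, hμ1]
    have hmassle : ∀ s, mass s ≤ 1 := by
      intro s
      rw [← hmass1]
      exact Finset.single_le_sum (fun s' _ => hmass0 s') (Finset.mem_univ s)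
    -- expected payments
    set T : Fin (n+1) → Fin (n+1) → ℝ :=
      fun s i => ∑ θ, μ θ * π θ s * (∑ j, F θ i j * p j) with hTdef
    have hT0 : ∀ s i, 0 ≤ T s i := by
      intro s i
      exact Finset.sum_nonneg fun θ _ => mul_nonneg (mul_nonneg (hμ0 θ) (hπ0 θ s))
        (Finset.sum_nonneg fun j _ => mul_nonneg (hF0 θ i j) (hp0 j))
    have hICexp : ∀ s i : Fin (n+1),
        ∑ θ, μ θ * π θ s * ((∑ j, F θ i j * p j) - c i) = T s i - c i * mass s := by
      intro s i
      rw [hTdef, hmassdef]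
      simp only [mul_sub, Finset.sum_sub_distrib, ← Finset.sum_mul]
      ring
    have hIC' : ∀ s i : Fin (n+1), T s i - c i * mass s ≤ T s s - c s * mass s := by
      intro s i
      have := hIC s i
      rwa [hICexp s i, hICexp s s] at this
    -- total revenue bound
    have hVeq : V (π, p) = (∑ s, ∑ θ, μ θ * π θ s * (∑ j, F θ s j * r j)) - ∑ s, T s s := by
      rw [hVdef, hTdef]
      simp only [hexp, mul_sub, Finset.sum_sub_distrib]
    have hR1 : (∑ s, ∑ θ, μ θ * π θ s * (∑ j, F θ s j * r j)) ≤ 1 := by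
      calc (∑ s, ∑ θ, μ θ * π θ s * (∑ j, F θ s j * r j)) ≤ ∑ s, mass s := by
            refine Finset.sum_le_sum fun s _ => ?_
            rw [hmassdef]
            refine Finset.sum_le_sum fun θ _ => ?_
            have h1 : (∑ j, F θ s j * r j) ≤ 1 := by
              calc (∑ j, F θ s j * r j) ≤ ∑ j, F θ s j :=
                    Finset.sum_le_sum fun j _ => by
                      nlinarith [(hr j).2, hF0 θ s j]
                _ = 1 := hF1 θ s
            nlinarith [mul_nonneg (hμ0 θ) (hπ0 θ s)]
        _ = 1 := hmass1
    have hTsum : ∑ s, T s s ≤ 1 := by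
      have : 0 ≤ (∑ s, ∑ θ, μ θ * π θ s * (∑ j, F θ s j * r j)) - ∑ s, T s s := by
        rw [← hVeq]; exact hVx
      linarith
    have hTss : ∀ s, T s s ≤ 1 := by
      intro s
      calc T s s ≤ ∑ s', T s' s' :=
            Finset.single_le_sum (fun s' _ => hT0 s' s') (Finset.mem_univ s)
        _ ≤ 1 := hTsum
    have h2 : ∀ s i, T s i ≤ 2 := by
      intro s i
      have := hIC' s i
      have hcs : 0 ≤ c s * mass s := mul_nonneg (hc s).1 (hmass0 s)
      have hci : c i * mass s ≤ 1 := by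
        nlinarith [(hc i).1, (hc i).2, hmass0 s, hmassle s]
      nlinarith [hTss s]
    -- bound on payments on relevant outcomes
    have h3 : ∀ (i : Fin (n+1)) (θ0 : Θ) (j0 : Fin m), μ θ0 * F θ0 i j0 * p j0 ≤ C := by
      intro i θ0 j0
      have hsum : ∑ s, T s i ≤ C := by
        calc ∑ s, T s i ≤ ∑ _s : Fin (n+1), (2:ℝ) :=
              Finset.sum_le_sum fun s _ => h2 s i
          _ = C := by
              rw [Finset.sum_const, Finset.card_univ, Fintype.card_fin, hCdef]
              ring
      have hswap : ∑ s, T s i = ∑ θ, μ θ * (∑ j, F θ i j * p j) := by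
        rw [hTdef]
        rw [Finset.sum_comm]
        refine Finset.sum_congr rfl fun θ _ => ?_
        calc ∑ s, μ θ * π θ s * (∑ j, F θ i j * p j)
            = (∑ s, π θ s) * (μ θ * (∑ j, F θ i j * p j)) := by
              rw [Finset.sum_mul]
              exact Finset.sum_congr rfl fun s _ => by ring
          _ = μ θ * (∑ j, F θ i j * p j) := by rw [hπ1 θ, one_mul]
      have hθ : μ θ0 * (∑ j, F θ0 i j * p j) ≤ C := by
        calc μ θ0 * (∑ j, F θ0 i j * p j) ≤ ∑ θ, μ θ * (∑ j, F θ i j * p j) :=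
              Finset.single_le_sum
                (fun θ _ => mul_nonneg (hμ0 θ)
                  (Finset.sum_nonneg fun j _ => mul_nonneg (hF0 θ i j) (hp0 j)))
                (Finset.mem_univ θ0)
          _ = ∑ s, T s i := hswap.symm
          _ ≤ C := hsum
      have hj : F θ0 i j0 * p j0 ≤ ∑ j, F θ0 i j * p j :=
        Finset.single_le_sum (fun j _ => mul_nonneg (hF0 θ0 i j) (hp0 j))
          (Finset.mem_univ j0)
      nlinarith [hμ0 θ0]
    -- the truncated payment vector
    set p' : Fin m → ℝ := fun j =>
      if ∃ t : Θ × Fin (n+1), 0 < μ t.1 * F t.1 t.2 j then p j else 0 with hp'def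
    have hp'0 : ∀ j, 0 ≤ p' j := by
      intro j; rw [hp'def]; dsimp only; split
      · exact hp0 j
      · exact le_rfl
    have hp'B : ∀ j, p' j ≤ B := by
      intro j
      rw [hp'def]
      dsimp only
      split
      · rename_i h
        obtain ⟨⟨θ0, i0⟩, hpos⟩ := h
        have hb := h3 i0 θ0 j
        have : p j ≤ C / (μ θ0 * F θ0 i0 j) := by
          rw [le_div_iff₀ hpos]
          nlinarith
        exact this.trans (hBge θ0 i0 j hpos)
      · exact hB0
    have hsub : ∀ θ i, μ θ * (∑ j, F θ i j * p' j) = μ θ * (∑ j, F θ i j * p j) := by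
      intro θ i
      rw [Finset.mul_sum, Finset.mul_sum]
      refine Finset.sum_congr rfl fun j _ => ?_
      rw [hp'def]
      dsimp only
      split
      · rfl
      · rename_i h
        push_neg at h
        have h0 := h (θ, i)
        have h1 : μ θ * F θ i j = 0 :=
          le_antisymm h0 (mul_nonneg (hμ0 θ) (hF0 θ i j))
        linear_combination (-(p j)) * h1
    refine ⟨(π, p'), ⟨⟨hπ0, hπ1, hp'0, ?_⟩, hp'B⟩, ?_⟩
    · intro s i
      have e : ∀ i' : Fin (n+1),
          ∑ θ, μ θ * π θ s * ((∑ j, F θ i' j * p' j) - c i') =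
          ∑ θ, μ θ * π θ s * ((∑ j, F θ i' j * p j) - c i') := by
        intro i'
        refine Finset.sum_congr rfl fun θ _ => ?_
        linear_combination (π θ s) * hsub θ i'
      rw [e i, e s]
      exact hIC s i
    · rw [hVdef]
      dsimp only
      refine Finset.sum_congr rfl fun s _ => Finset.sum_congr rfl fun θ _ => ?_
      rw [hexp p' θ s, hexp p θ s]
      linear_combination (-(π θ s)) * hsub θ s
  -- continuity facts
  have hc1 : ∀ (θ : Θ) (s : Fin (n+1)),
      Continuous (fun x : (Θ → Fin (n+1) → ℝ) × (Fin m → ℝ) => x.1 θ s) :=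
    fun θ s => (continuous_apply s).comp ((continuous_apply θ).comp continuous_fst)
  have hc2 : ∀ (j : Fin m),
      Continuous (fun x : (Θ → Fin (n+1) → ℝ) × (Fin m → ℝ) => x.2 j) :=
    fun j => (continuous_apply j).comp continuous_snd
  have hcIC : ∀ (s i : Fin (n+1)),
      Continuous (fun x : (Θ → Fin (n+1) → ℝ) × (Fin m → ℝ) =>
        ∑ θ, μ θ * x.1 θ s * ((∑ j, F θ i j * x.2 j) - c i)) := by
    intro s i
    refine continuous_finset_sum _ fun θ _ => ?_
    exact (continuous_const.mul (hc1 θ s)).mul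
      ((continuous_finset_sum _ fun j _ => continuous_const.mul (hc2 j)).sub
        continuous_const)
  have hVcont : Continuous V := by
    rw [hVdef]
    refine continuous_finset_sum _ fun s _ => continuous_finset_sum _ fun θ _ => ?_
    exact (continuous_const.mul (hc1 θ s)).mul
      (continuous_finset_sum _ fun j _ => continuous_const.mul
        (continuous_const.sub (hc2 j)))
  -- K is compact
  have hKeq : K =
        ({x : (Θ → Fin (n+1) → ℝ) × (Fin m → ℝ) | ∀ θ s, 0 ≤ x.1 θ s} ∩
          ({x | ∀ θ, ∑ s, x.1 θ s = 1} ∩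
          ({x | ∀ j, 0 ≤ x.2 j} ∩ ({x | ∀ s i : Fin (n+1),
            ∑ θ, μ θ * x.1 θ s * ((∑ j, F θ i j * x.2 j) - c i) ≤
            ∑ θ, μ θ * x.1 θ s * ((∑ j, F θ s j * x.2 j) - c s)} ∩
          {x | ∀ j, x.2 j ≤ B})))) := by
    ext x
    simp only [hKdef, hFeasdef, Set.mem_setOf_eq, Set.mem_inter_iff]
    tauto
  have hKclosed : IsClosed K := by
    rw [hKeq]
    refine IsClosed.inter ?_ (IsClosed.inter ?_ (IsClosed.inter ?_ (IsClosed.inter ?_ ?_)))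
    · rw [Set.setOf_forall]
      refine isClosed_iInter fun θ => ?_
      rw [Set.setOf_forall]
      exact isClosed_iInter fun s => isClosed_le continuous_const (hc1 θ s)
    · rw [Set.setOf_forall]
      exact isClosed_iInter fun θ =>
        isClosed_eq (continuous_finset_sum _ fun s _ => hc1 θ s) continuous_const
    · rw [Set.setOf_forall]
      exact isClosed_iInter fun j => isClosed_le continuous_const (hc2 j)
    · rw [Set.setOf_forall]
      refine isClosed_iInter fun s => ?_
      rw [Set.setOf_forall]
      exact isClosed_iInter fun i => isClosed_le (hcIC s i) (hcIC s s)
    · rw [Set.setOf_forall]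
      exact isClosed_iInter fun j => isClosed_le (hc2 j) continuous_const
  have hKsub : K ⊆ Set.Icc (((fun _ _ => 0 : Θ → Fin (n+1) → ℝ)), (fun _ => 0 : Fin m → ℝ))
      ((fun _ _ => 1), (fun _ => B)) := by
    rintro ⟨π, p⟩ ⟨⟨hπ0, hπ1, hp0, _⟩, hpB⟩
    simp only [Set.mem_Icc, Prod.le_def, Pi.le_def]
    refine ⟨⟨fun θ s => hπ0 θ s, fun j => hp0 j⟩, ⟨fun θ s => ?_, fun j => hpB j⟩⟩
    calc π θ s ≤ ∑ s', π θ s' :=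
          Finset.single_le_sum (fun s' _ => hπ0 θ s') (Finset.mem_univ s)
      _ = 1 := hπ1 θ
  have hKcomp : IsCompact K := IsCompact.of_isClosed_subset isCompact_Icc hKclosed hKsub
  obtain ⟨xs, hxsK, hmax⟩ := hKcomp.exists_isMaxOn ⟨x0, hx0K⟩ hVcont.continuousOn
  obtain ⟨⟨hs0, hs1, hsp, hsIC⟩, _⟩ := hxsK
  refine ⟨xs.1, xs.2, hs0, hs1, hsp, fun s i => hsIC s i, ?_⟩
  intro S _ π p a h0 h1 hp hICc
  -- reduce to a direct mechanism
  set π' : Θ → Fin (n+1) → ℝ := fun θ i => ∑ s, if a s = i then π θ s else 0 with hπ'def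
  have hswap : ∀ (i0 : Fin (n+1)) (X : Θ → ℝ),
      ∑ θ, μ θ * π' θ i0 * X θ =
      ∑ s, if a s = i0 then ∑ θ, μ θ * π θ s * X θ else 0 := by
    intro i0 X
    calc ∑ θ, μ θ * π' θ i0 * X θ
        = ∑ θ, ∑ s, (if a s = i0 then μ θ * π θ s * X θ else 0) := by
          refine Finset.sum_congr rfl fun θ _ => ?_
          rw [hπ'def]
          dsimp only
          rw [Finset.mul_sum, Finset.sum_mul]
          refine Finset.sum_congr rfl fun s _ => ?_
          split <;> ring
      _ = ∑ s, ∑ θ, (if a s = i0 then μ θ * π θ s * X θ else 0) := Finset.sum_comm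
      _ = ∑ s, if a s = i0 then ∑ θ, μ θ * π θ s * X θ else 0 := by
          refine Finset.sum_congr rfl fun s _ => ?_
          by_cases h : a s = i0 <;> simp [h]
  have hfeas' : (π', p) ∈ Feas := by
    refine ⟨?_, ?_, hp, ?_⟩
    · intro θ i
      refine Finset.sum_nonneg fun s _ => ?_
      split
      · exact h0 θ s
      · exact le_rfl
    · intro θ
      rw [hπ'def]
      dsimp only
      rw [Finset.sum_comm]
      simp [Finset.sum_ite_eq, h1 θ]
    · intro s0 i
      have e1 := hswap s0 (fun θ => (∑ j, F θ i j * p j) - c i)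
      have e2 := hswap s0 (fun θ => (∑ j, F θ s0 j * p j) - c s0)
      rw [e1, e2]
      refine Finset.sum_le_sum fun s _ => ?_
      by_cases h : a s = s0
      · simp only [if_pos h]
        have := hICc s i
        rw [h] at this
        exact this
      · simp [h]
  have hval : V (π', p) = ∑ s, ∑ θ, μ θ * π θ s * (∑ j, F θ (a s) j * (r j - p j)) := by
    rw [hVdef]
    dsimp only
    calc ∑ i0, ∑ θ, μ θ * π' θ i0 * (∑ j, F θ i0 j * (r j - p j))
        = ∑ i0, ∑ s, if a s = i0 then
            ∑ θ, μ θ * π θ s * (∑ j, F θ i0 j * (r j - p j)) else 0 := by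
          refine Finset.sum_congr rfl fun i0 _ => ?_
          exact hswap i0 (fun θ => ∑ j, F θ i0 j * (r j - p j))
      _ = ∑ s, ∑ i0, if a s = i0 then
            ∑ θ, μ θ * π θ s * (∑ j, F θ i0 j * (r j - p j)) else 0 := Finset.sum_comm
      _ = ∑ s, ∑ θ, μ θ * π θ s * (∑ j, F θ (a s) j * (r j - p j)) := by
          refine Finset.sum_congr rfl fun s _ => ?_
          rw [Finset.sum_ite_eq]
          simp
  have hle : V (π', p) ≤ V xs := by
    by_cases hV0 : 0 ≤ V (π', p)
    · obtain ⟨y, hyK, hyV⟩ := htrunc _ hfeas' hV0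
      rw [← hyV]
      exact hmax hyK
    · have h1' : V x0 ≤ V xs := hmax hx0K
      push_neg at hV0
      linarith [hx0V]
  calc ∑ s, ∑ θ, μ θ * π θ s * (∑ j, F θ (a s) j * (r j - p j)) = V (π', p) := hval.symm
    _ ≤ V xs := hle
    _ = ∑ s, ∑ θ, μ θ * xs.1 θ s * (∑ j, F θ s j * (r j - xs.2 j)) := by rw [hVdef]
end

section
/- In the joint design problem with menus of linear contracts, consider a mechanism where two signals s₁, s₂ carry the same linear-contract parameter α and induce the same best-response action a. Merging them into one signal s̄ with π(s̄|θ) = π(s₁|θ) + π(s₂|θ) and contract parameter α yields a mechanism in which a is still a best response to s̄ and the principal's utility is unchanged. Consequently, for any mechanism using contract parameters restricted to a finite set A of size 1/ε + 1, there is an equally good mechanism using at most n·(1/ε + 1) signals. -/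
/-- Menus of linear contracts: (1) two signals with the same linear parameter α
and the same best response a can be merged, preserving incentive compatibility
and the principal's utility; (2) consequently, any mechanism with parameters in
a finite set A of size 1/ε+1 can be replaced by an equally good one using at
most n·(1/ε+1) signals (one per action-parameter pair). -/
theorem stmt_11 {Θ : Type} [Fintype Θ] {n m : ℕ}
    (μ : Θ → ℝ) (F : Θ → Fin n → Fin m → ℝ) (r : Fin m → ℝ) (c : Fin n → ℝ)
    (ε : ℝ) (hε : 0 < ε) :
    (∀ (S : Type) [Fintype S], ∀ (π : Θ → S → ℝ) (s₁ s₂ : S) (α : ℝ) (a : Fin n),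
      (∀ i, ∑ θ, μ θ * π θ s₁ * (α * (∑ j, F θ a j * r j) - c a) ≥
            ∑ θ, μ θ * π θ s₁ * (α * (∑ j, F θ i j * r j) - c i)) →
      (∀ i, ∑ θ, μ θ * π θ s₂ * (α * (∑ j, F θ a j * r j) - c a) ≥
            ∑ θ, μ θ * π θ s₂ * (α * (∑ j, F θ i j * r j) - c i)) →
      ((∀ i, ∑ θ, μ θ * (π θ s₁ + π θ s₂) * (α * (∑ j, F θ a j * r j) - c a) ≥
             ∑ θ, μ θ * (π θ s₁ + π θ s₂) * (α * (∑ j, F θ i j * r j) - c i)) ∧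
       ∑ θ, μ θ * (π θ s₁ + π θ s₂) * ((1 - α) * (∑ j, F θ a j * r j)) =
         ∑ θ, μ θ * π θ s₁ * ((1 - α) * (∑ j, F θ a j * r j)) +
         ∑ θ, μ θ * π θ s₂ * ((1 - α) * (∑ j, F θ a j * r j)))) ∧
    (∀ (A : Finset ℝ), (A.card : ℝ) = 1/ε + 1 →
      ∀ (S : Type) [Fintype S], ∀ (π : Θ → S → ℝ) (αf : S → ℝ) (a : S → Fin n),
      (∀ θ s, 0 ≤ π θ s) → (∀ θ, ∑ s, π θ s = 1) → (∀ s, αf s ∈ A) →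
      (∀ s i, ∑ θ, μ θ * π θ s * (αf s * (∑ j, F θ (a s) j * r j) - c (a s)) ≥
              ∑ θ, μ θ * π θ s * (αf s * (∑ j, F θ i j * r j) - c i)) →
      ((Fintype.card (Fin n × {x // x ∈ A}) : ℝ) ≤ n * (1/ε + 1) ∧
        ∃ π' : Θ → Fin n × {x // x ∈ A} → ℝ,
          (∀ θ s, 0 ≤ π' θ s) ∧ (∀ θ, ∑ s, π' θ s = 1) ∧
          (∀ (s : Fin n × {x // x ∈ A}) (i : Fin n),
            ∑ θ, μ θ * π' θ s * ((s.2 : ℝ) * (∑ j, F θ s.1 j * r j) - c s.1) ≥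
            ∑ θ, μ θ * π' θ s * ((s.2 : ℝ) * (∑ j, F θ i j * r j) - c i)) ∧
          ∑ s : Fin n × {x // x ∈ A}, ∑ θ,
              μ θ * π' θ s * ((1 - (s.2 : ℝ)) * (∑ j, F θ s.1 j * r j)) =
            ∑ s : S, ∑ θ,
              μ θ * π θ s * ((1 - αf s) * (∑ j, F θ (a s) j * r j)))) := by
  constructor
  · intro S _ π s₁ s₂ α a h1 h2
    have e : ∀ (b : Fin n),
        ∑ θ, μ θ * (π θ s₁ + π θ s₂) * (α * (∑ j, F θ b j * r j) - c b) =
        (∑ θ, μ θ * π θ s₁ * (α * (∑ j, F θ b j * r j) - c b)) +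
        (∑ θ, μ θ * π θ s₂ * (α * (∑ j, F θ b j * r j) - c b)) := by
      intro b
      rw [← Finset.sum_add_distrib]
      exact Finset.sum_congr rfl fun θ _ => by ring
    constructor
    · intro i
      rw [e, e]
      exact add_le_add (h1 i) (h2 i)
    · rw [← Finset.sum_add_distrib]
      exact Finset.sum_congr rfl fun θ _ => by ring
  · intro A hA S _ π αf a hπ0 hπ1 hαA hIC
    classical
    constructor
    · rw [Fintype.card_prod, Fintype.card_fin, Fintype.card_coe]
      push_cast
      rw [hA]
    · set g : S → Fin n × {x // x ∈ A} := fun s => (a s, ⟨αf s, hαA s⟩) with hg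
      have hswap : ∀ (p : Fin n × {x // x ∈ A}) (X : Θ → ℝ),
          ∑ θ, μ θ * (∑ s ∈ Finset.univ.filter (fun s => g s = p), π θ s) * X θ =
          ∑ s ∈ Finset.univ.filter (fun s => g s = p), ∑ θ, μ θ * π θ s * X θ := by
        intro p X
        rw [Finset.sum_comm]
        exact Finset.sum_congr rfl fun θ _ => by rw [Finset.mul_sum, Finset.sum_mul]
      refine ⟨fun θ p => ∑ s ∈ Finset.univ.filter (fun s => g s = p), π θ s, ?_, ?_, ?_, ?_⟩
      · intro θ p
        exact Finset.sum_nonneg fun s _ => hπ0 θ s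
      · intro θ
        rw [Finset.sum_fiberwise]
        exact hπ1 θ
      · intro p i
        rw [hswap, hswap]
        refine Finset.sum_le_sum fun s hs => ?_
        have h := (Finset.mem_filter.mp hs).2
        have h1 : a s = p.1 := by rw [← h]
        have h2 : αf s = (p.2 : ℝ) := by rw [← h]
        rw [← h1, ← h2]
        exact hIC s i
      · calc ∑ p : Fin n × {x // x ∈ A}, ∑ θ,
              μ θ * (∑ s ∈ Finset.univ.filter (fun s => g s = p), π θ s) *
                ((1 - (p.2 : ℝ)) * (∑ j, F θ p.1 j * r j))
            = ∑ p : Fin n × {x // x ∈ A}, ∑ s ∈ Finset.univ.filter (fun s => g s = p),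
                ∑ θ, μ θ * π θ s * ((1 - αf s) * (∑ j, F θ (a s) j * r j)) := by
              refine Finset.sum_congr rfl fun p _ => ?_
              rw [hswap]
              refine Finset.sum_congr rfl fun s hs => ?_
              have h := (Finset.mem_filter.mp hs).2
              have h1 : a s = p.1 := by rw [← h]
              have h2 : αf s = (p.2 : ℝ) := by rw [← h]
              rw [h1, h2]
          _ = ∑ s : S, ∑ θ, μ θ * π θ s * ((1 - αf s) * (∑ j, F θ (a s) j * r j)) :=
              Finset.sum_fiberwise _ _ _
end

section
/- Let g: P → ℝ be defined on a compact set P ⊆ ℝ₊^m by g(p) = max over feasible signaling schemes π of ∑_θ μ(θ)∑_s π(s|θ)⟨F^θ_{a(s,p,π)}, r − p⟩, where a(s,p,π) is the agent's best response with ties broken in favor of the principal. Then g is upper semicontinuous on P and attains its maximum on P. -/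
open Set

namespace Stmt18Aux

variable {Θ : Type} [Fintype Θ] {n m : ℕ}
  (μ : Θ → ℝ) (F : Θ → Fin n → Fin m → ℝ) (c : Fin n → ℝ) (r : Fin m → ℝ)

/-- The joint incentive-compatibility constraint set, as a subset of
contract × scheme space, for a fixed recommendation map `a`. -/
def ic (a : Fin n → Fin n) : Set ((Fin m → ℝ) × (Θ → Fin n → ℝ)) :=
  {x | ∀ s i, ∑ θ, μ θ * x.2 θ s * ((∑ j, F θ i j * x.1 j) - c i) ≤
       ∑ θ, μ θ * x.2 θ s * ((∑ j, F θ (a s) j * x.1 j) - c (a s))}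

/-- The principal's value. -/
def val (a : Fin n → Fin n) (x : (Fin m → ℝ) × (Θ → Fin n → ℝ)) : ℝ :=
  ∑ s, ∑ θ, μ θ * x.2 θ s * (∑ j, F θ (a s) j * (r j - x.1 j))

/-- The simplex of signaling schemes. -/
def simplex : Set (Θ → Fin n → ℝ) :=
  {π | (∀ θ s, 0 ≤ π θ s) ∧ ∀ θ, ∑ s, π θ s = 1}

/-- The set of achievable principal utilities at contract `p`. -/
def Sset (p : Fin m → ℝ) : Set ℝ :=
  ⋃ a : Fin n → Fin n,
    (fun π => val μ F r a (p, π)) '' (simplex ∩ (Prod.mk p ⁻¹' ic μ F c a))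

lemma continuous_val (a : Fin n → Fin n) : Continuous (val μ F r a) := by
  unfold val; fun_prop

lemma isClosed_ic (a : Fin n → Fin n) : IsClosed (ic μ F c a) := by
  have h : ic μ F c a = ⋂ s, ⋂ i,
      {x : (Fin m → ℝ) × (Θ → Fin n → ℝ) |
        ∑ θ, μ θ * x.2 θ s * ((∑ j, F θ i j * x.1 j) - c i) ≤
        ∑ θ, μ θ * x.2 θ s * ((∑ j, F θ (a s) j * x.1 j) - c (a s))} := by
    ext x; simp [ic, mem_iInter]
  rw [h]
  exact isClosed_iInter fun s => isClosed_iInter fun i =>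
    isClosed_le (by fun_prop) (by fun_prop)

lemma isCompact_simplex : IsCompact (simplex : Set (Θ → Fin n → ℝ)) := by
  have hsub : (simplex : Set (Θ → Fin n → ℝ)) ⊆
      Set.pi Set.univ (fun _ : Θ => Set.pi Set.univ fun _ : Fin n => Set.Icc (0:ℝ) 1) := by
    rintro π ⟨h0, h1⟩ θ _
    intro s _
    refine ⟨h0 θ s, ?_⟩
    calc π θ s ≤ ∑ t, π θ t :=
          Finset.single_le_sum (fun t _ => h0 θ t) (Finset.mem_univ s)
      _ = 1 := h1 θ
  have hcl : IsClosed (simplex : Set (Θ → Fin n → ℝ)) := by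
    have h : (simplex : Set (Θ → Fin n → ℝ)) =
        (⋂ θ, ⋂ s, {π : Θ → Fin n → ℝ | 0 ≤ π θ s}) ∩
        ⋂ θ, {π : Θ → Fin n → ℝ | ∑ s, π θ s = 1} := by
      ext π; simp [simplex, mem_iInter]
    rw [h]
    exact IsClosed.inter
      (isClosed_iInter fun θ => isClosed_iInter fun s =>
        isClosed_le continuous_const (by fun_prop))
      (isClosed_iInter fun θ => isClosed_eq (by fun_prop) continuous_const)
  exact IsCompact.of_isClosed_subset
    (isCompact_univ_pi fun _ => isCompact_univ_pi fun _ => isCompact_Icc) hcl hsub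

lemma isCompact_Sset (p : Fin m → ℝ) : IsCompact (Sset μ F c r p) := by
  refine isCompact_iUnion fun a => ?_
  refine IsCompact.image ?_ ?_
  · exact isCompact_simplex.inter_right
      ((isClosed_ic μ F c a).preimage (continuous_const.prodMk continuous_id))
  · exact (continuous_val μ F r a).comp (continuous_const.prodMk continuous_id)

lemma nonempty_Sset (hn : 0 < n) (hμ0 : ∀ θ, 0 ≤ μ θ) (p : Fin m → ℝ) :
    (Sset μ F c r p).Nonempty := by
  haveI : Nonempty (Fin n) := ⟨⟨0, hn⟩⟩
  obtain ⟨i0, hi0⟩ := Finite.exists_max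
    (fun i : Fin n => ∑ θ, μ θ * (n : ℝ)⁻¹ * ((∑ j, F θ i j * p j) - c i))
  refine ⟨val μ F r (fun _ => i0) (p, fun _ _ => (n : ℝ)⁻¹), ?_⟩
  refine mem_iUnion.2 ⟨fun _ => i0, ⟨fun _ _ => (n : ℝ)⁻¹, ⟨⟨?_, ?_⟩, ?_⟩, rfl⟩⟩
  · intro θ s; positivity
  · intro θ
    rw [Finset.sum_const, Finset.card_univ, Fintype.card_fin, nsmul_eq_mul,
      mul_inv_cancel₀ (by exact_mod_cast hn.ne')]
  · intro s i; exact hi0 i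

end Stmt18Aux

open Stmt18Aux in
/-- The value function g(p) of the single-contract joint design problem (the
best principal utility over feasible direct signaling schemes and incentive-
compatible recommendations, with ties broken in the principal's favor) is upper
semicontinuous on a compact set of contracts and attains its maximum there. -/
theorem stmt_18 {Θ : Type} [Fintype Θ] {n m : ℕ}
    (μ : Θ → ℝ) (F : Θ → Fin n → Fin m → ℝ) (c : Fin n → ℝ) (r : Fin m → ℝ)
    (hn : 0 < n) (hμ0 : ∀ θ, 0 ≤ μ θ) (hμ1 : ∑ θ, μ θ = 1)
    (hF0 : ∀ θ i j, 0 ≤ F θ i j) (hF1 : ∀ θ i, ∑ j, F θ i j = 1)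
    (P : Set (Fin m → ℝ)) (hPc : IsCompact P) (hPne : P.Nonempty)
    (hPnn : ∀ p ∈ P, ∀ j, 0 ≤ p j) :
    let g : (Fin m → ℝ) → ℝ := fun p => sSup {u : ℝ |
      ∃ (π : Θ → Fin n → ℝ) (a : Fin n → Fin n),
        (∀ θ s, 0 ≤ π θ s) ∧ (∀ θ, ∑ s, π θ s = 1) ∧
        (∀ s i, ∑ θ, μ θ * π θ s * ((∑ j, F θ (a s) j * p j) - c (a s)) ≥
                ∑ θ, μ θ * π θ s * ((∑ j, F θ i j * p j) - c i)) ∧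
        u = ∑ s, ∑ θ, μ θ * π θ s * (∑ j, F θ (a s) j * (r j - p j))}
    UpperSemicontinuousOn g P ∧ ∃ p ∈ P, ∀ q ∈ P, g q ≤ g p := by
  classical
  intro g
  -- identify the defining set with `Sset`
  have hset : ∀ p : Fin m → ℝ, {u : ℝ |
      ∃ (π : Θ → Fin n → ℝ) (a : Fin n → Fin n),
        (∀ θ s, 0 ≤ π θ s) ∧ (∀ θ, ∑ s, π θ s = 1) ∧
        (∀ s i, ∑ θ, μ θ * π θ s * ((∑ j, F θ (a s) j * p j) - c (a s)) ≥
                ∑ θ, μ θ * π θ s * ((∑ j, F θ i j * p j) - c i)) ∧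
        u = ∑ s, ∑ θ, μ θ * π θ s * (∑ j, F θ (a s) j * (r j - p j))}
      = Sset μ F c r p := by
    intro p
    ext u
    constructor
    · rintro ⟨π, a, h1, h2, h3, h4⟩
      exact mem_iUnion.2 ⟨a, π, ⟨⟨h1, h2⟩, fun s i => h3 s i⟩, h4.symm⟩
    · rintro hu
      obtain ⟨a, π, ⟨⟨h1, h2⟩, h3⟩, h4⟩ := mem_iUnion.1 hu
      exact ⟨π, a, h1, h2, fun s i => h3 s i, h4.symm⟩
  have hg : ∀ p, g p = sSup (Sset μ F c r p) := fun p => congrArg sSup (hset p)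
  have hScomp := fun p => isCompact_Sset μ F c r p
  have hSne := fun p => nonempty_Sset μ F c r hn hμ0 p
  -- g p is attained and is an upper bound
  have hgmem : ∀ p, g p ∈ Sset μ F c r p := fun p => by
    rw [hg p]; exact (hScomp p).sSup_mem (hSne p)
  have hgub : ∀ p, ∀ u ∈ Sset μ F c r p, u ≤ g p := fun p u hu => by
    rw [hg p]; exact le_csSup (hScomp p).bddAbove hu
  -- the global feasible set for a fixed recommendation map
  set G : (Fin n → Fin n) → Set ((Fin m → ℝ) × (Θ → Fin n → ℝ)) :=
    fun a => (P ×ˢ simplex) ∩ ic μ F c a with hG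
  have hGcomp : ∀ a, IsCompact (G a) := fun a =>
    (hPc.prod (isCompact_simplex)).inter_right (isClosed_ic μ F c a)
  have hGS : ∀ a, ∀ x ∈ G a, val μ F r a x ∈ Sset μ F c r x.1 := by
    rintro a x ⟨⟨hx1, hx2⟩, hx3⟩
    exact mem_iUnion.2 ⟨a, x.2, ⟨hx2, hx3⟩, rfl⟩
  have hSG : ∀ p ∈ P, ∀ u ∈ Sset μ F c r p,
      ∃ a, ∃ x ∈ G a, x.1 = p ∧ val μ F r a x = u := by
    intro p hp u hu
    obtain ⟨a, π, ⟨h1, h2⟩, h4⟩ := mem_iUnion.1 hu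
    exact ⟨a, (p, π), ⟨⟨hp, h1⟩, h2⟩, rfl, h4⟩
  constructor
  · -- upper semicontinuity
    intro p hp y hy
    -- bad sets: contracts admitting a feasible pair with value ≥ y
    set T : (Fin n → Fin n) → Set ((Fin m → ℝ) × (Θ → Fin n → ℝ)) :=
      fun a => G a ∩ {x | y ≤ val μ F r a x} with hT
    have hTcomp : ∀ a, IsCompact (T a) := fun a =>
      (hGcomp a).inter_right (isClosed_le continuous_const (continuous_val μ F r a))
    have hBadcomp : IsCompact (⋃ a, Prod.fst '' T a) :=
      isCompact_iUnion fun a => (hTcomp a).image continuous_fst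
    have hUopen : IsOpen ((⋃ a, Prod.fst '' T a)ᶜ) := hBadcomp.isClosed.isOpen_compl
    have hpU : p ∈ (⋃ a, Prod.fst '' T a)ᶜ := by
      intro hmem
      obtain ⟨a, ha⟩ := mem_iUnion.1 hmem
      obtain ⟨x, hxT, hx1⟩ := ha
      have h1 : val μ F r a x ∈ Sset μ F c r p := hx1 ▸ hGS a x hxT.1
      have h2 : val μ F r a x ≤ g p := hgub p _ h1
      exact absurd (hxT.2.trans h2) (not_le.2 hy)
    refine Filter.eventually_iff_exists_mem.2
      ⟨(⋃ a, Prod.fst '' T a)ᶜ ∩ P, ?_, ?_⟩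
    · exact Filter.inter_mem (mem_nhdsWithin_of_mem_nhds (hUopen.mem_nhds hpU))
        self_mem_nhdsWithin
    · rintro q ⟨hqU, hqP⟩
      by_contra hcon
      push_neg at hcon
      obtain ⟨a, x, hxG, hx1, hxval⟩ := hSG q hqP (g q) (hgmem q)
      have hxT : x ∈ T a := ⟨hxG, hcon.trans_eq hxval.symm⟩
      exact hqU (mem_iUnion.2 ⟨a, x, hxT, hx1⟩)
  · -- attainment of the maximum
    set V : Set ℝ := ⋃ a, val μ F r a '' G a with hV
    have hVcomp : IsCompact V :=
      isCompact_iUnion fun a => (hGcomp a).image (continuous_val μ F r a)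
    have hSV : ∀ p ∈ P, Sset μ F c r p ⊆ V := by
      intro p hp u hu
      obtain ⟨a, x, hxG, hx1, hxval⟩ := hSG p hp u hu
      exact mem_iUnion.2 ⟨a, x, hxG, hxval⟩
    obtain ⟨p0, hp0⟩ := hPne
    have hVne : V.Nonempty := by
      obtain ⟨u, hu⟩ := hSne p0
      exact ⟨u, hSV p0 hp0 hu⟩
    have hsSup : sSup V ∈ V := hVcomp.sSup_mem hVne
    obtain ⟨a, ha⟩ := mem_iUnion.1 hsSup
    obtain ⟨x, hxG, hxval⟩ := ha
    refine ⟨x.1, hxG.1.1, ?_⟩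
    intro q hq
    calc g q ≤ sSup V := le_csSup hVcomp.bddAbove (hSV q hq (hgmem q))
      _ = val μ F r a x := hxval.symm
      _ ≤ g x.1 := hgub x.1 _ (hGS a x hxG)
end
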